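/- Let ρ and σ be density operators on a finite-dimensional complex Hilbert space with supp(ρ) ⊆ supp(σ), let α > 1 with α' = α/(α−1), let (P(i))_i be a finite projection-valued measure (mutually orthogonal projections summing to 𝟙), let t(i) ≥ 0 be nonnegative reals, and set T := Σ_i t(i) P(i). If Tr[ρT] > 0, then the classical Rényi divergence of the induced outcome distributions p_{ρ,P}(i) = Tr[ρP(i)], q_{σ,P}(i) = Tr[σP(i)] satisfies D_α(p_{ρ,P} ‖ q_{σ,P}) ≥ α' log Tr[ρT] − log Tr[σ T^{α'}]. -/

import Mathlib

open Matrix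
open scoped ComplexOrder

noncomputable section

/-- Real part of the trace. -/
def retr {ι : Type*} [Fintype ι] (A : Matrix ι ι ℂ) : ℝ :=
  (Matrix.trace A).re

open scoped Classical in
/-- Classical Rényi divergence of order `α` of two (finitely supported) probability
mass functions, with value `+∞` when `α > 1` and absolute continuity fails. -/
def renyiDivE (α : ℝ) {k : ℕ} (p q : Fin k → ℝ) : EReal :=
  if α < 1 ∨ ∀ i, q i = 0 → p i = 0 then
    (((α - 1)⁻¹ * Real.log (∑ i, p i ^ α * q i ^ (1 - α)) : ℝ) : EReal)
  else (⊤ : EReal)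

private lemma re_trace_conjT_mul_self {ι : Type*} [Fintype ι] (A : Matrix ι ι ℂ) :
    (Matrix.trace (Aᴴ * A)).re = ∑ j, ∑ i, Complex.normSq (A i j) := by
  simp [Matrix.trace, Matrix.diag, Matrix.mul_apply, Complex.normSq_apply]

private lemma re_trace_conjT_mul_self_nonneg {ι : Type*} [Fintype ι] (A : Matrix ι ι ℂ) :
    0 ≤ (Matrix.trace (Aᴴ * A)).re := by
  rw [re_trace_conjT_mul_self]
  exact Finset.sum_nonneg fun j _ => Finset.sum_nonneg fun i _ => Complex.normSq_nonneg _

private lemma eq_zero_of_re_trace_conjT_mul_self {ι : Type*} [Fintype ι] (A : Matrix ι ι ℂ)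
    (h : (Matrix.trace (Aᴴ * A)).re = 0) : A = 0 := by
  rw [re_trace_conjT_mul_self] at h
  ext i j
  have h1 := (Finset.sum_eq_zero_iff_of_nonneg (fun j _ =>
    Finset.sum_nonneg fun i _ => Complex.normSq_nonneg (A i j))).mp h j (Finset.mem_univ j)
  have h2 := (Finset.sum_eq_zero_iff_of_nonneg (fun i _ =>
    Complex.normSq_nonneg (A i j))).mp h1 i (Finset.mem_univ i)
  simpa using Complex.normSq_eq_zero.mp h2

/-- Trace against a projection is the trace of `(B*P)ᴴ*(B*P)` when `A = Bᴴ*B`. -/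
private lemma trace_psd_proj {ι : Type*} [Fintype ι] {A P : Matrix ι ι ℂ}
    (hA : A.PosSemidef) (hP : Pᴴ = P) (hPP : P * P = P) :
    0 ≤ (Matrix.trace (A * P)).re ∧
      ((Matrix.trace (A * P)).re = 0 → A * P = 0) := by
  obtain ⟨B, rfl⟩ : ∃ B : Matrix ι ι ℂ, A = Bᴴ * B := by
    classical
    open scoped MatrixOrder in exact CStarAlgebra.nonneg_iff_eq_star_mul_self.mp hA.nonneg
  have key : Matrix.trace (Bᴴ * B * P) = Matrix.trace ((B * P)ᴴ * (B * P)) := by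
    have h1 : (B * P)ᴴ * (B * P) = P * (Bᴴ * B * P) := by
      simp only [Matrix.conjTranspose_mul, hP, Matrix.mul_assoc]
    calc Matrix.trace (Bᴴ * B * P) = Matrix.trace (Bᴴ * B * P * P) := by
          rw [Matrix.mul_assoc (Bᴴ * B) P P, hPP]
      _ = Matrix.trace (P * (Bᴴ * B * P)) := (Matrix.trace_mul_comm _ _)
      _ = Matrix.trace ((B * P)ᴴ * (B * P)) := by rw [h1]
  refine ⟨key ▸ re_trace_conjT_mul_self_nonneg _, fun h0 => ?_⟩
  have hBP : B * P = 0 := eq_zero_of_re_trace_conjT_mul_self _ (by rw [← key, h0])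
  rw [Matrix.mul_assoc, hBP, Matrix.mul_zero]

private lemma matrix_eq_zero_of_mulVec {ι : Type*} [Fintype ι] [DecidableEq ι]
    (A : Matrix ι ι ℂ) (h : ∀ v, A.mulVec v = 0) : A = 0 := by
  ext i j
  have := congrFun (h (Pi.single j 1)) i
  simpa [Matrix.mulVec_single] using this

/-- classical Hölder step on the outcome distributions of a PVM.
Let `(P i)` be a finite projection-valued measure (mutually orthogonal projections
summing to `𝟙`), `t i ≥ 0`, and `T = ∑ i, t i • P i`. If `Tr[ρT] > 0`, then for `α > 1`
with `α' = α/(α-1)`, the induced outcome distributions `p_{ρ,P}, q_{σ,P}` satisfy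
`D_α(p_{ρ,P} ‖ q_{σ,P}) ≥ α' log Tr[ρT] - log Tr[σ T^{α'}]`, where
`T^{α'} = ∑ i, (t i)^{α'} • P i` (functional calculus). -/
theorem classical_pvm_holder_bound
    {ι : Type*} [Fintype ι] [DecidableEq ι]
    (ρ σ : Matrix ι ι ℂ)
    (hρ : ρ.PosSemidef) (hρtr : ρ.trace = 1)
    (hσ : σ.PosSemidef) (hσtr : σ.trace = 1)
    (hsupp : ∀ v : ι → ℂ, σ.mulVec v = 0 → ρ.mulVec v = 0)
    (α : ℝ) (hα : 1 < α) (α' : ℝ) (hα' : α' = α / (α - 1))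
    {k : ℕ} (P : Fin k → Matrix ι ι ℂ)
    (hProj : ∀ i, (P i).IsHermitian ∧ P i * P i = P i)
    (hOrth : ∀ i j, i ≠ j → P i * P j = 0)
    (hSum : ∑ i, P i = 1)
    (t : Fin k → ℝ) (ht : ∀ i, 0 ≤ t i)
    (T : Matrix ι ι ℂ) (hT : T = ∑ i, t i • P i)
    (hTρ : 0 < retr (ρ * T)) :
    ((α' * Real.log (retr (ρ * T))
        - Real.log (retr (σ * ∑ i, (t i ^ α' : ℝ) • P i)) : ℝ) : EReal) ≤
      renyiDivE α (fun i => retr (ρ * P i)) (fun i => retr (σ * P i)) := by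
  have hα1 : 0 < α - 1 := by linarith
  have hα'pos : 0 < α' := by rw [hα']; positivity
  have hconj : Real.HolderConjugate α α' := by
    rw [Real.holderConjugate_iff]
    refine ⟨hα, ?_⟩
    rw [hα']
    field_simp
    ring
  set p : Fin k → ℝ := fun i => retr (ρ * P i) with hpdef
  set q : Fin k → ℝ := fun i => retr (σ * P i) with hqdef
  have hp : ∀ i, 0 ≤ p i := fun i =>
    (trace_psd_proj hρ (hProj i).1 (hProj i).2).1
  have hq : ∀ i, 0 ≤ q i := fun i =>
    (trace_psd_proj hσ (hProj i).1 (hProj i).2).1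
  -- absolute continuity
  have habs : ∀ i, q i = 0 → p i = 0 := by
    intro i hqi
    have hσP : σ * P i = 0 := (trace_psd_proj hσ (hProj i).1 (hProj i).2).2 hqi
    have hρP : ρ * P i = 0 := by
      apply matrix_eq_zero_of_mulVec
      intro v
      have hσv : σ.mulVec ((P i).mulVec v) = 0 := by
        rw [Matrix.mulVec_mulVec, hσP, Matrix.zero_mulVec]
      have := hsupp _ hσv
      rwa [Matrix.mulVec_mulVec] at this
    simp [hpdef, retr, hρP]
  -- trace computations
  have htrρ : retr (ρ * T) = ∑ i, t i * p i := by
    have : ρ * T = ∑ i, t i • (ρ * P i) := by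
      rw [hT, Finset.mul_sum]
      simp [Matrix.mul_smul]
    simp [retr, this, Matrix.trace_sum, Matrix.trace_smul, Complex.smul_re, hpdef]
  have htrσ : retr (σ * ∑ i, (t i ^ α' : ℝ) • P i) = ∑ i, t i ^ α' * q i := by
    have : σ * (∑ i, (t i ^ α' : ℝ) • P i) = ∑ i, (t i ^ α' : ℝ) • (σ * P i) := by
      rw [Finset.mul_sum]
      simp [Matrix.mul_smul]
    simp [retr, this, Matrix.trace_sum, Matrix.trace_smul, Complex.smul_re, hqdef]
  set S : ℝ := ∑ i, p i ^ α * q i ^ (1 - α) with hSdef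
  set C : ℝ := ∑ i, t i ^ α' * q i with hCdef
  -- Hölder
  set f : Fin k → ℝ := fun i => (p i ^ α * q i ^ (1 - α)) ^ (1 / α) with hfdef
  set g : Fin k → ℝ := fun i => (t i ^ α' * q i) ^ (1 / α') with hgdef
  have hf0 : ∀ i, 0 ≤ f i := fun i => Real.rpow_nonneg
    (mul_nonneg (Real.rpow_nonneg (hp i) _) (Real.rpow_nonneg (hq i) _)) _
  have hg0 : ∀ i, 0 ≤ g i := fun i => Real.rpow_nonneg
    (mul_nonneg (Real.rpow_nonneg (ht i) _) (hq i)) _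
  have hfg : ∀ i, t i * p i = f i * g i := by
    intro i
    rcases eq_or_lt_of_le (hq i) with hqi | hqi
    · have hpi : p i = 0 := habs i hqi.symm
      have hfi : f i = 0 := by
        show (p i ^ α * q i ^ (1 - α)) ^ (1 / α) = 0
        rw [hpi, Real.zero_rpow (by positivity : α ≠ 0), zero_mul,
          Real.zero_rpow (by positivity : (1:ℝ)/α ≠ 0)]
      rw [hpi, hfi, mul_zero, zero_mul]
    · have h1 : f i = p i * q i ^ ((1 - α) / α) := by
        show (p i ^ α * q i ^ (1 - α)) ^ (1 / α) = _
        rw [Real.mul_rpow (Real.rpow_nonneg (hp i) _) (Real.rpow_nonneg (le_of_lt hqi) _),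
          ← Real.rpow_mul (hp i), ← Real.rpow_mul (le_of_lt hqi)]
        rw [mul_one_div_cancel (by positivity : α ≠ 0), Real.rpow_one]
        ring_nf
      have h2 : g i = t i * q i ^ (1 / α') := by
        show (t i ^ α' * q i) ^ (1 / α') = _
        rw [Real.mul_rpow (Real.rpow_nonneg (ht i) _) (hq i),
          ← Real.rpow_mul (ht i), mul_one_div_cancel (ne_of_gt hα'pos), Real.rpow_one]
      have h3 : q i ^ ((1 - α) / α) * q i ^ (1 / α') = 1 := by
        rw [← Real.rpow_add hqi]
        have : (1 - α) / α + 1 / α' = 0 := by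
          rw [hα']
          field_simp
          ring
        rw [this, Real.rpow_zero]
      rw [h1, h2]
      have h4 : p i * q i ^ ((1 - α) / α) * (t i * q i ^ (1 / α')) =
          t i * p i * (q i ^ ((1 - α) / α) * q i ^ (1 / α')) := by ring
      rw [h4, h3, mul_one]
  have hfα : ∀ i, f i ^ α = p i ^ α * q i ^ (1 - α) := by
    intro i
    have hx : (0:ℝ) ≤ p i ^ α * q i ^ (1 - α) :=
      mul_nonneg (Real.rpow_nonneg (hp i) _) (Real.rpow_nonneg (hq i) _)
    show ((p i ^ α * q i ^ (1 - α)) ^ (1 / α)) ^ α = _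
    rw [← Real.rpow_mul hx, one_div,
      inv_mul_cancel₀ (by positivity : α ≠ 0), Real.rpow_one]
  have hgα : ∀ i, g i ^ α' = t i ^ α' * q i := by
    intro i
    have hx : (0:ℝ) ≤ t i ^ α' * q i :=
      mul_nonneg (Real.rpow_nonneg (ht i) _) (hq i)
    show ((t i ^ α' * q i) ^ (1 / α')) ^ α' = _
    rw [← Real.rpow_mul hx, one_div,
      inv_mul_cancel₀ (ne_of_gt hα'pos), Real.rpow_one]
  have holder : retr (ρ * T) ≤ S ^ (1 / α) * C ^ (1 / α') := by
    rw [htrρ]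
    calc ∑ i, t i * p i = ∑ i, f i * g i := Finset.sum_congr rfl fun i _ => hfg i
      _ ≤ (∑ i, f i ^ α) ^ (1 / α) * (∑ i, g i ^ α') ^ (1 / α') :=
          Real.inner_le_Lp_mul_Lq_of_nonneg Finset.univ hconj
            (fun i _ => hf0 i) (fun i _ => hg0 i)
      _ = S ^ (1 / α) * C ^ (1 / α') := by
          rw [hSdef, hCdef]
          congr 1
          · congr 1
            exact Finset.sum_congr rfl fun i _ => hfα i
          · congr 1
            exact Finset.sum_congr rfl fun i _ => hgα i
  have hS0 : 0 ≤ S := Finset.sum_nonneg fun i _ =>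
    mul_nonneg (Real.rpow_nonneg (hp i) _) (Real.rpow_nonneg (hq i) _)
  have hC0 : 0 ≤ C := Finset.sum_nonneg fun i _ =>
    mul_nonneg (Real.rpow_nonneg (ht i) _) (hq i)
  have hSpos : 0 < S := by
    rcases eq_or_lt_of_le hS0 with h | h
    · exfalso
      rw [← h, Real.zero_rpow (by positivity : (1:ℝ)/α ≠ 0), zero_mul] at holder
      linarith
    · exact h
  have hCpos : 0 < C := by
    rcases eq_or_lt_of_le hC0 with h | h
    · exfalso
      rw [← h, Real.zero_rpow (by positivity : (1:ℝ)/α' ≠ 0), mul_zero] at holder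
      linarith
    · exact h
  have hlog : Real.log (retr (ρ * T)) ≤
      (1 / α) * Real.log S + (1 / α') * Real.log C := by
    calc Real.log (retr (ρ * T)) ≤ Real.log (S ^ (1 / α) * C ^ (1 / α')) :=
          Real.log_le_log hTρ holder
      _ = (1 / α) * Real.log S + (1 / α') * Real.log C := by
          rw [Real.log_mul (ne_of_gt (Real.rpow_pos_of_pos hSpos _))
                (ne_of_gt (Real.rpow_pos_of_pos hCpos _)),
            Real.log_rpow hSpos, Real.log_rpow hCpos]
  -- conclude
  have hgoal : α' * Real.log (retr (ρ * T)) - Real.log C ≤ (α - 1)⁻¹ * Real.log S := by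
    have e1 : α' * (1 / α) = (α - 1)⁻¹ := by
      rw [hα']
      field_simp
    have e2 : α' * (1 / α') = 1 := by
      rw [mul_one_div, div_self (ne_of_gt hα'pos)]
    have h3 := mul_le_mul_of_nonneg_left hlog (le_of_lt hα'pos)
    rw [mul_add, ← mul_assoc, ← mul_assoc, e1, e2, one_mul] at h3
    linarith
  rw [renyiDivE, if_pos (Or.inr habs)]
  rw [htrσ, ← hSdef]
  exact EReal.coe_le_coe_iff.mpr hgoal

end
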